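/- Let α ∈ [0,1] and let μ be a finite positive Borel measure on ℝ. If there exists a constant C > 0 such that W_μ(t) < C·t^(−α) for every t > 0, then μ is uniformly (α/2)-Hölder continuous. -/

import Mathlib

open MeasureTheory Filter Set Metric
open scoped ENNReal Topology Classical

noncomputable section

/-- `μ` is uniformly `α`-Hölder continuous: there is `C > 0` with
`μ(I) < C |I|^α` for every (nondegenerate) interval `I` with `|I| < 1`. -/
def UnifHolder (μ : Measure ℝ) (α : ℝ) : Prop :=
  ∃ C > (0 : ℝ), ∀ a b : ℝ, a < b → b - a < 1 →
    μ (Set.Icc a b) < ENNReal.ofReal (C * (b - a) ^ α)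

/-- The Fourier transform `μ̂(s) = ∫ e^{-isx} dμ(x)` of a finite Borel measure on `ℝ`. -/
def measureFT (μ : Measure ℝ) (s : ℝ) : ℂ :=
  ∫ x : ℝ, Complex.exp (-(s * x) * Complex.I) ∂μ

/-- The time-average quantum return probability
`W_μ(t) = (1/t) ∫_0^t |μ̂(s)|² ds`. -/
def Wavg (μ : Measure ℝ) (t : ℝ) : ℝ :=
  (1 / t) * ∫ s in Set.Ioc (0 : ℝ) t, ‖measureFT μ s‖ ^ 2

/-- `μ` is the spectral measure of the pair `(T, ψ)`: it is finite, vanishes outside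
the spectrum of `T`, and `∫ f dμ = ⟨ψ, f(T)ψ⟩` for every continuous `f : ℝ → ℝ`,
where `f(T)` is given by the continuous functional calculus. -/
def IsSpectralMeasure {H : Type*} [NormedAddCommGroup H] [InnerProductSpace ℂ H]
    [CompleteSpace H] (T : H →L[ℂ] H) (ψ : H) (μ : Measure ℝ) : Prop :=
  IsFiniteMeasure μ ∧ μ {x : ℝ | (x : ℂ) ∉ spectrum ℂ T} = 0 ∧
    ∀ f : C(ℝ, ℝ), ∫ x, f x ∂μ = (inner ℂ ψ ((cfc (f : ℝ → ℝ) T) ψ) : ℂ).re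

/-- The real part of the spectrum of a bounded operator. -/
def realSpectrum {H : Type*} [NormedAddCommGroup H] [InnerProductSpace ℂ H]
    [CompleteSpace H] (T : H →L[ℂ] H) : Set ℝ :=
  {x : ℝ | (x : ℂ) ∈ spectrum ℂ T}

/-- `μ` is `α`-Hausdorff continuous: `μ(Λ) = 0` for every Borel set `Λ` with
`h^α(Λ) = 0`. -/
def HausdorffCont (μ : Measure ℝ) (α : ℝ) : Prop :=
  ∀ Λ : Set ℝ, MeasurableSet Λ → μH[α] Λ = 0 → μ Λ = 0

/-- The lower pointwise scaling exponent `d⁻_μ(x)`, with value `∞` when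
`μ(B(x;ε)) = 0` for some `ε > 0`. -/
def dLow (μ : Measure ℝ) (x : ℝ) : EReal :=
  if ∃ ε > (0 : ℝ), μ (Metric.ball x ε) = 0 then ⊤
  else Filter.liminf
    (fun ε : ℝ => ((Real.log (μ (Metric.ball x ε)).toReal / Real.log ε : ℝ) : EReal))
    (𝓝[>] (0 : ℝ))

/-- The upper pointwise scaling exponent `d⁺_μ(x)`, with value `∞` when
`μ(B(x;ε)) = 0` for some `ε > 0`. -/
def dUp (μ : Measure ℝ) (x : ℝ) : EReal :=
  if ∃ ε > (0 : ℝ), μ (Metric.ball x ε) = 0 then ⊤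
  else Filter.limsup
    (fun ε : ℝ => ((Real.log (μ (Metric.ball x ε)).toReal / Real.log ε : ℝ) : EReal))
    (𝓝[>] (0 : ℝ))

/-- The lower correlation dimension `D⁻_μ(2)`. -/
def DLow2 (μ : Measure ℝ) : EReal :=
  Filter.liminf
    (fun ε : ℝ =>
      ((Real.log (∫ x, (μ (Metric.ball x ε)).toReal ∂μ) / Real.log ε : ℝ) : EReal))
    (𝓝[>] (0 : ℝ))

/-- The upper correlation dimension `D⁺_μ(2)`. -/
def DUp2 (μ : Measure ℝ) : EReal :=
  Filter.limsup
    (fun ε : ℝ =>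
      ((Real.log (∫ x, (μ (Metric.ball x ε)).toReal ∂μ) / Real.log ε : ℝ) : EReal))
    (𝓝[>] (0 : ℝ))

/-- A set is generic (residual / comeagre in the Baire sense used in the paper)
if it contains a dense `G_δ` set. -/
def Generic {X : Type*} [TopologicalSpace X] (A : Set X) : Prop :=
  ∃ S : Set X, S ⊆ A ∧ IsGδ S ∧ Dense S

section Aux

lemma integrable_of_bdd {X : Type*} {E : Type*} [NormedAddCommGroup E]
    {mX : MeasurableSpace X} {ν : Measure X} [IsFiniteMeasure ν]
    {f : X → E} (hm : AEStronglyMeasurable f ν) {c : ℝ} (hb : ∀ x, ‖f x‖ ≤ c) :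
    Integrable f ν :=
  Integrable.mono' (integrable_const c) hm (Filter.Eventually.of_forall hb)

lemma continuous_measureFT (μ : Measure ℝ) [IsFiniteMeasure μ] :
    Continuous (measureFT μ) := by
  unfold measureFT
  apply continuous_of_dominated (bound := fun _ => (1:ℝ))
  · intro s; apply Continuous.aestronglyMeasurable; fun_prop
  · intro s
    filter_upwards with x
    have : (-(s*x) * Complex.I : ℂ) = ((-(s*x) : ℝ):ℂ) * Complex.I := by push_cast; ring
    rw [this, Complex.norm_exp_ofReal_mul_I]
  · exact integrable_const 1
  · filter_upwards with x; fun_prop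

/-- The Fejér-type kernel. -/
def Gker (T u : ℝ) : ℝ := ∫ s in Set.Ioc (0:ℝ) T, (1 - s/T) * Real.cos (s*u)

lemma continuous_Gker {T : ℝ} (hT : 0 < T) : Continuous (Gker T) := by
  have : IsFiniteMeasure (volume.restrict (Set.Ioc (0:ℝ) T)) :=
    ⟨by rw [Measure.restrict_apply_univ]; exact measure_Ioc_lt_top⟩
  unfold Gker
  apply continuous_of_dominated (bound := fun _ => (1:ℝ))
  · intro u; apply Continuous.aestronglyMeasurable; fun_prop
  · intro u
    filter_upwards [ae_restrict_mem measurableSet_Ioc] with s hs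
    rw [Real.norm_eq_abs, abs_mul]
    have h1 : |1 - s/T| ≤ 1 := by
      rw [abs_le]
      constructor
      · have : s/T ≤ 1 := (div_le_one hT).2 hs.2; linarith
      · have : 0 ≤ s/T := div_nonneg hs.1.le hT.le; linarith
    exact mul_le_one₀ h1 (abs_nonneg _) (Real.abs_cos_le_one _)
  · exact integrable_const 1
  · filter_upwards with s; fun_prop

lemma Gker_ub {T : ℝ} (hT : 0 < T) (u : ℝ) : ‖Gker T u‖ ≤ T := by
  rw [Gker]
  have h := norm_setIntegral_le_of_norm_le_const (μ := volume) (s := Set.Ioc (0:ℝ) T)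
    (f := fun s => (1 - s/T) * Real.cos (s*u)) (C := 1) measure_Ioc_lt_top ?_
  · calc ‖∫ s in Set.Ioc (0:ℝ) T, (1 - s/T) * Real.cos (s*u)‖
        ≤ 1 * (volume (Set.Ioc (0:ℝ) T)).toReal := h
      _ = T := by simp [Real.volume_Ioc, ENNReal.toReal_ofReal hT.le]
  · intro s hs
    rw [Real.norm_eq_abs, abs_mul]
    have h1 : |1 - s/T| ≤ 1 := by
      rw [abs_le]
      constructor
      · have : s/T ≤ 1 := (div_le_one hT).2 hs.2; linarith
      · have : 0 ≤ s/T := div_nonneg hs.1.le hT.le; linarith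
    exact mul_le_one₀ h1 (abs_nonneg _) (Real.abs_cos_le_one _)

end Aux
lemma one_sub_cos_lb {x : ℝ} (hx : |x| ≤ 1) : x ^ 2 / 5 ≤ 1 - Real.cos x := by
  wlog hx0 : 0 ≤ x generalizing x
  · have := this (x := |x|) (by rwa [abs_abs]) (abs_nonneg x)
    rwa [Real.cos_abs, sq_abs] at this
  rw [abs_of_nonneg hx0] at hx
  have h2 : Real.cos x = Real.cos (x/2) ^ 2 - Real.sin (x/2) ^ 2 := by
    rw [← Real.cos_two_mul']; ring_nf
  have h3 := Real.sin_sq_add_cos_sq (x/2)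
  have hpi : Real.pi < 3.15 := Real.pi_lt_d2
  have hpi2 : Real.pi > 3 := Real.pi_gt_three
  have hsin : 2 / Real.pi * (x/2) ≤ Real.sin (x/2) :=
    Real.mul_le_sin (by linarith) (by nlinarith)
  have hs0 : 0 ≤ 2 / Real.pi * (x/2) := by positivity
  have hsq : (2 / Real.pi * (x/2)) ^ 2 ≤ Real.sin (x/2) ^ 2 :=
    pow_le_pow_left₀ hs0 hsin 2
  have hexp : (2 / Real.pi * (x/2)) ^ 2 = x^2 / Real.pi^2 := by
    field_simp
  rw [hexp, div_le_iff₀ (by positivity)] at hsq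
  have hpisq : Real.pi^2 < 9.9225 := by nlinarith
  nlinarith [sq_nonneg x, sq_nonneg (Real.sin (x/2)), hpisq,
    mul_nonneg (sq_nonneg (Real.sin (x/2))) (le_of_lt (by linarith : (0:ℝ) < 9.9225 - Real.pi^2))]



lemma Gker_zero {T : ℝ} (hT : 0 < T) : Gker T 0 = T/2 := by
  rw [Gker, ← intervalIntegral.integral_of_le hT.le]
  have : ∀ s ∈ Set.uIcc (0:ℝ) T, HasDerivAt (fun s => s - s^2/(2*T)) ((1 - s/T) * Real.cos (s*0)) s := by
    intro s _
    simp only [mul_zero, Real.cos_zero, mul_one]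
    have h1 : HasDerivAt (fun s : ℝ => s - s^2/(2*T)) (1 - (2*s^1)/(2*T)) s :=
      (hasDerivAt_id s).sub ((hasDerivAt_pow 2 s).div_const (2*T))
    convert h1 using 1
    field_simp
  rw [intervalIntegral.integral_eq_sub_of_hasDerivAt this]
  · field_simp; ring
  · apply Continuous.intervalIntegrable; fun_prop

lemma Gker_ne_zero {T u : ℝ} (hT : 0 < T) (hu : u ≠ 0) :
    Gker T u = (1 - Real.cos (T*u)) / (T*u^2) := by
  rw [Gker, ← intervalIntegral.integral_of_le hT.le]
  set F : ℝ → ℝ := fun s => (1 - s/T) * Real.sin (s*u) / u - Real.cos (s*u)/(T*u^2) with hF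
  have hder : ∀ s ∈ Set.uIcc (0:ℝ) T, HasDerivAt F ((1 - s/T) * Real.cos (s*u)) s := by
    intro s _
    have hsin : HasDerivAt (fun s : ℝ => Real.sin (s*u)) (Real.cos (s*u) * u) s :=
      (hasDerivAt_mul_const u).sin
    have hcos : HasDerivAt (fun s : ℝ => Real.cos (s*u)) (-Real.sin (s*u) * u) s :=
      (hasDerivAt_mul_const u).cos
    have hlin : HasDerivAt (fun s : ℝ => 1 - s/T) (-(1/T)) s := by
      exact HasDerivAt.const_sub 1 ((hasDerivAt_id s).div_const T)
    have h1 : HasDerivAt (fun s => (1 - s/T) * Real.sin (s*u) / u)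
        ((-(1/T) * Real.sin (s*u) + (1 - s/T) * (Real.cos (s*u) * u)) / u) s :=
      (hlin.mul hsin).div_const u
    have h2 : HasDerivAt (fun s => Real.cos (s*u)/(T*u^2)) ((-Real.sin (s*u) * u)/(T*u^2)) s :=
      hcos.div_const (T*u^2)
    have := h1.sub h2
    refine HasDerivAt.congr_deriv this ?_
    field_simp
    ring
  rw [intervalIntegral.integral_eq_sub_of_hasDerivAt hder
    (by apply Continuous.intervalIntegrable; fun_prop)]
  simp only [hF]
  rw [div_self hT.ne']
  simp [Real.sin_zero, Real.cos_zero]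
  field_simp
  ring

lemma Gker_nonneg {T u : ℝ} (hT : 0 < T) : 0 ≤ Gker T u := by
  rcases eq_or_ne u 0 with rfl | hu
  · rw [Gker_zero hT]; positivity
  · rw [Gker_ne_zero hT hu]
    apply div_nonneg
    · have := Real.cos_le_one (T*u); linarith
    · positivity

lemma Gker_lb {T u : ℝ} (hT : 0 < T) (hu : |u| ≤ 1/T) : T/5 ≤ Gker T u := by
  rcases eq_or_ne u 0 with rfl | hu0
  · rw [Gker_zero hT]; linarith
  · rw [Gker_ne_zero hT hu0]
    have hTu : |T*u| ≤ 1 := by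
      rw [abs_mul, abs_of_pos hT]
      calc T * |u| ≤ T * (1/T) := by
            exact mul_le_mul_of_nonneg_left hu hT.le
        _ = 1 := by field_simp
    have h1 := one_sub_cos_lb hTu
    rw [le_div_iff₀ (by positivity : (0:ℝ) < T*u^2)]
    nlinarith [h1]

lemma ft_norm_sq (μ : Measure ℝ) [IsFiniteMeasure μ] (s : ℝ) :
    ‖measureFT μ s‖ ^ 2 = ∫ p : ℝ × ℝ, Real.cos (s * (p.1 - p.2)) ∂(μ.prod μ) := by
  have key : (measureFT μ s) * (starRingEnd ℂ) (measureFT μ s)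
      = ∫ p : ℝ × ℝ, Complex.exp (-(s * (p.1 - p.2)) * Complex.I) ∂(μ.prod μ) := by
    rw [measureFT, ← integral_conj, ← integral_prod_mul]
    congr 1
    ext p
    rw [← Complex.exp_conj, ← Complex.exp_add]
    congr 1
    simp only [map_mul, map_neg, Complex.conj_I, Complex.conj_ofReal]
    push_cast
    ring
  have hint : Integrable (fun p : ℝ × ℝ => Complex.exp (-(s * (p.1 - p.2)) * Complex.I))
      (μ.prod μ) := by
    refine integrable_of_bdd ?_ (c := 1) ?_
    · apply Continuous.aestronglyMeasurable
      fun_prop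
    · intro p
      have : (-(s * (p.1 - p.2)) * Complex.I : ℂ) = ((-(s * (p.1 - p.2)) : ℝ) : ℂ) * Complex.I := by
        push_cast; ring
      rw [this, Complex.norm_exp_ofReal_mul_I]
  have hre : ∀ p : ℝ × ℝ, (Complex.exp (-(s * (p.1 - p.2)) * Complex.I)).re
      = Real.cos (s * (p.1 - p.2)) := by
    intro p
    have : (-(s * (p.1 - p.2)) * Complex.I : ℂ) = ((-(s * (p.1 - p.2)) : ℝ) : ℂ) * Complex.I := by
      push_cast; ring
    rw [this, Complex.exp_ofReal_mul_I_re, Real.cos_neg]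
  calc ‖measureFT μ s‖ ^ 2
      = ((measureFT μ s) * (starRingEnd ℂ) (measureFT μ s)).re := by
        rw [Complex.mul_conj]
        simp only [Complex.normSq_eq_norm_sq]
        norm_cast
    _ = ∫ p : ℝ × ℝ, (Complex.exp (-(s * (p.1 - p.2)) * Complex.I)).re ∂(μ.prod μ) := by
        rw [key]; exact (integral_re hint).symm
    _ = ∫ p : ℝ × ℝ, Real.cos (s * (p.1 - p.2)) ∂(μ.prod μ) :=
        integral_congr_ae (Filter.Eventually.of_forall fun p => hre p)

/-- If `W_μ(t) < C t^{-α}` for all `t > 0`, then `μ` is uniformly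
`(α/2)`-Hölder continuous. -/
theorem stmt_1 (α : ℝ) (hα : α ∈ Set.Icc (0 : ℝ) 1) (μ : Measure ℝ) [IsFiniteMeasure μ]
    (C : ℝ) (hC : 0 < C) (h : ∀ t > (0 : ℝ), Wavg μ t < C * t ^ (-α)) :
    UnifHolder μ (α / 2) := by
  obtain ⟨hα0, hα1⟩ := hα
  have hsqrt : 0 < Real.sqrt C := Real.sqrt_pos.2 hC
  refine ⟨3 * Real.sqrt C, by positivity, ?_⟩
  intro a b hab hlen
  set δ := b - a with hδdef
  have hδ0 : 0 < δ := by simp only [hδdef]; linarith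
  have hδ1 : δ < 1 := hlen
  set T := δ⁻¹ with hTdef
  have hT0 : 0 < T := by positivity
  set ν := μ.prod μ with hν
  have finrestr : IsFiniteMeasure (volume.restrict (Set.Ioc (0:ℝ) T)) :=
    ⟨by rw [Measure.restrict_apply_univ]; exact measure_Ioc_lt_top⟩
  set J := ∫ s in Set.Ioc (0:ℝ) T, (1 - s/T) * ‖measureFT μ s‖^2 with hJ
  -- Fubini: J equals the double integral of the kernel
  have hcontF : Continuous (Function.uncurry
      fun (s : ℝ) (p : ℝ × ℝ) => (1 - s/T) * Real.cos (s * (p.1 - p.2))) := by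
    apply Continuous.mul
    · fun_prop
    · apply Real.continuous_cos.comp
      fun_prop
  have hintF : Integrable (Function.uncurry
      fun (s : ℝ) (p : ℝ × ℝ) => (1 - s/T) * Real.cos (s * (p.1 - p.2)))
      ((volume.restrict (Set.Ioc (0:ℝ) T)).prod ν) := by
    have hae : ∀ᵐ z ∂((volume.restrict (Set.Ioc (0:ℝ) T)).prod ν),
        z.1 ∈ Set.Ioc (0:ℝ) T := by
      rw [ae_iff]
      have hset : {z : ℝ × (ℝ × ℝ) | ¬ z.1 ∈ Set.Ioc (0:ℝ) T}
          = (Set.Ioc (0:ℝ) T)ᶜ ×ˢ (Set.univ : Set (ℝ × ℝ)) := by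
        ext z; simp
      rw [hset, Measure.prod_prod, Measure.restrict_apply measurableSet_Ioc.compl]
      simp
    refine Integrable.mono' (integrable_const 1) hcontF.aestronglyMeasurable ?_
    filter_upwards [hae] with z hz
    rw [Function.uncurry, Real.norm_eq_abs, abs_mul]
    have h1 : |1 - z.1/T| ≤ 1 := by
      rw [abs_le]
      constructor
      · have : z.1/T ≤ 1 := (div_le_one hT0).2 hz.2; linarith
      · have : 0 ≤ z.1/T := div_nonneg hz.1.le hT0.le; linarith
    exact mul_le_one₀ h1 (abs_nonneg _) (Real.abs_cos_le_one _)
  have hswap : J = ∫ p, Gker T (p.1 - p.2) ∂ν := by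
    have e1 : ∀ s : ℝ, (1 - s/T) * ‖measureFT μ s‖^2
        = ∫ p : ℝ × ℝ, (1 - s/T) * Real.cos (s * (p.1 - p.2)) ∂ν := fun s => by
      rw [ft_norm_sq μ s, ← integral_const_mul]
    calc J = ∫ s in Set.Ioc (0:ℝ) T, ∫ p : ℝ × ℝ,
          (1 - s/T) * Real.cos (s * (p.1 - p.2)) ∂ν :=
        integral_congr_ae (Filter.Eventually.of_forall e1)
      _ = ∫ p : ℝ × ℝ, (∫ s in Set.Ioc (0:ℝ) T,
          (1 - s/T) * Real.cos (s * (p.1 - p.2))) ∂ν :=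
        integral_integral_swap hintF
      _ = ∫ p, Gker T (p.1 - p.2) ∂ν := rfl
  -- lower bound for the double integral
  have hGint : Integrable (fun p : ℝ × ℝ => Gker T (p.1 - p.2)) ν :=
    integrable_of_bdd (((continuous_Gker hT0).comp
      (continuous_fst.sub continuous_snd)).aestronglyMeasurable)
      (fun p => Gker_ub hT0 _)
  set m := (μ (Set.Icc a b)).toReal with hm
  have hII : (ν (Set.Icc a b ×ˢ Set.Icc a b)).toReal = m^2 := by
    rw [hν, Measure.prod_prod, ENNReal.toReal_mul]; ring
  have hlow : T/5 * m^2 ≤ ∫ p, Gker T (p.1 - p.2) ∂ν := by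
    have h1 : T/5 * (ν (Set.Icc a b ×ˢ Set.Icc a b)).toReal
        ≤ ∫ p in Set.Icc a b ×ˢ Set.Icc a b, Gker T (p.1 - p.2) ∂ν := by
      apply setIntegral_ge_of_const_le_real
      · exact (measurableSet_Icc.prod measurableSet_Icc)
      · exact measure_ne_top _ _
      · rintro ⟨x, y⟩ ⟨hx, hy⟩
        apply Gker_lb hT0
        rw [hTdef, one_div, inv_inv, abs_le]
        simp only [Set.mem_Icc] at hx hy
        constructor <;> [skip; skip] <;> simp only [hδdef] <;> linarith [hx.1, hx.2, hy.1, hy.2]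
      · exact hGint.integrableOn
    have h2 : ∫ p in Set.Icc a b ×ˢ Set.Icc a b, Gker T (p.1 - p.2) ∂ν
        ≤ ∫ p, Gker T (p.1 - p.2) ∂ν :=
      setIntegral_le_integral hGint
        (Filter.Eventually.of_forall fun p => Gker_nonneg hT0)
    rw [hII] at h1
    linarith
  -- upper bound: J ≤ T * Wavg μ T
  have hFTcont : Continuous fun s => ‖measureFT μ s‖^2 :=
    ((continuous_measureFT μ).norm.pow 2)
  have hup : J ≤ ∫ s in Set.Ioc (0:ℝ) T, ‖measureFT μ s‖^2 := by
    apply setIntegral_mono_on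
    · exact (Continuous.integrableOn_Icc (by fun_prop)).mono_set
        Set.Ioc_subset_Icc_self
    · exact (hFTcont.integrableOn_Icc).mono_set Set.Ioc_subset_Icc_self
    · exact measurableSet_Ioc
    · intro s hs
      have h0 : 0 ≤ ‖measureFT μ s‖^2 := by positivity
      have h1 : s/T ≤ 1 := (div_le_one hT0).2 hs.2
      have h2 : 0 ≤ s/T := div_nonneg hs.1.le hT0.le
      nlinarith
  -- conclude
  have hW := h T hT0
  have hWint : J ≤ T * Wavg μ T := by
    rw [Wavg]
    calc J ≤ ∫ s in Set.Ioc (0:ℝ) T, ‖measureFT μ s‖^2 := hup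
      _ = T * ((1/T) * ∫ s in Set.Ioc (0:ℝ) T, ‖measureFT μ s‖^2) := by
        field_simp
  have hTa : T ^ (-α) = δ ^ α := by
    rw [hTdef, Real.rpow_neg (inv_nonneg.2 hδ0.le), Real.inv_rpow hδ0.le, inv_inv]
  have hm2 : m^2 < 5 * C * δ ^ α := by
    have h1 : T * (m^2/5) < T * (C * δ^α) := by
      calc T * (m^2/5) = T/5 * m^2 := by ring
        _ ≤ J := hswap ▸ hlow
        _ ≤ T * Wavg μ T := hWint
        _ < T * (C * T^(-α)) := by exact mul_lt_mul_of_pos_left hW hT0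
        _ = T * (C * δ^α) := by rw [hTa]
    have h2 : m^2/5 < C * δ^α := lt_of_mul_lt_mul_left h1 hT0.le
    linarith
  rw [ENNReal.lt_ofReal_iff_toReal_lt (measure_ne_top μ _)]
  have hm0 : 0 ≤ m := ENNReal.toReal_nonneg
  have hδα : 0 < δ ^ α := Real.rpow_pos_of_pos hδ0 α
  have hR2 : (3 * Real.sqrt C * δ ^ (α/2))^2 = 9 * C * δ ^ α := by
    have h1 : (δ ^ (α/2))^2 = δ ^ α := by
      rw [← Real.rpow_natCast (δ ^ (α/2)) 2, ← Real.rpow_mul hδ0.le]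
      norm_num
    have h2 : Real.sqrt C ^ 2 = C := Real.sq_sqrt hC.le
    rw [mul_pow, mul_pow, h1, h2]
    ring
  have hRpos : 0 < 3 * Real.sqrt C * δ ^ (α/2) := by positivity
  nlinarith [hm2, hR2, hRpos, hm0, mul_pos hC hδα]
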